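/- arXiv:2109.02483 — 2 statements merged into one kernel-verified Lean document; each statement's English description precedes it below -/
import Mathlib

section
/- For every integer n ≥ 1, every κ > 0, and every r > 0, one has (n+1)·κ·∫₀ʳ sinh(κt)ⁿ dt ≥ sinh(κr)ⁿ · tanh(κr). -/
open Real intervalIntegral in
/-- `(n+1)·κ·∫₀ʳ sinh(κt)ⁿ dt ≥ sinh(κr)ⁿ · tanh(κr)`. -/
theorem stmt_1 (n : ℕ) (hn : 1 ≤ n) (κ r : ℝ) (hκ : 0 < κ) (hr : 0 < r) :
    Real.sinh (κ * r) ^ n * Real.tanh (κ * r) ≤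
      ((n : ℝ) + 1) * κ * ∫ t in (0:ℝ)..r, Real.sinh (κ * t) ^ n := by
  set g : ℝ → ℝ := fun t =>
    ((((n:ℝ)+1) * Real.sinh (κ*t) ^ n * (Real.cosh (κ*t) * κ)) * Real.cosh (κ*t)
      - Real.sinh (κ*t) ^ (n+1) * (Real.sinh (κ*t) * κ)) / Real.cosh (κ*t) ^ 2 with hg
  have hF : ∀ t : ℝ, HasDerivAt (fun t => Real.sinh (κ*t) ^ (n+1) / Real.cosh (κ*t)) (g t) t := by
    intro t
    have hlin : HasDerivAt (fun t : ℝ => κ * t) κ t := by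
      simpa using (hasDerivAt_id t).const_mul κ
    have hs : HasDerivAt (fun t : ℝ => Real.sinh (κ*t)) (Real.cosh (κ*t) * κ) t :=
      (Real.hasDerivAt_sinh _).comp t hlin
    have hc : HasDerivAt (fun t : ℝ => Real.cosh (κ*t)) (Real.sinh (κ*t) * κ) t :=
      (Real.hasDerivAt_cosh _).comp t hlin
    have := (hs.pow (n+1)).div hc (Real.cosh_pos _).ne'
    refine this.congr_deriv ?_
    simp [hg]
  have hgc : Continuous g := by
    apply Continuous.div
    · fun_prop
    · fun_prop
    · intro t; positivity
  have hint : (∫ t in (0:ℝ)..r, g t) =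
      Real.sinh (κ*r) ^ (n+1) / Real.cosh (κ*r) - Real.sinh (κ*0) ^ (n+1) / Real.cosh (κ*0) :=
    intervalIntegral.integral_eq_sub_of_hasDerivAt (fun t _ => hF t)
      (hgc.intervalIntegrable 0 r)
  have hmono : (∫ t in (0:ℝ)..r, g t) ≤
      ∫ t in (0:ℝ)..r, ((n:ℝ)+1) * κ * Real.sinh (κ*t) ^ n := by
    apply intervalIntegral.integral_mono_on hr.le (hgc.intervalIntegrable 0 r)
      ((by fun_prop : Continuous fun t => ((n:ℝ)+1) * κ * Real.sinh (κ*t) ^ n).intervalIntegrable 0 r)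
    intro t ht
    have hts : 0 ≤ Real.sinh (κ*t) := Real.sinh_nonneg_iff.2 (mul_nonneg hκ.le ht.1)
    have hcp : (0:ℝ) < Real.cosh (κ*t) := Real.cosh_pos _
    rw [hg, div_le_iff₀ (by positivity)]
    have h2 : 0 ≤ Real.sinh (κ*t) ^ (n+1) * (Real.sinh (κ*t) * κ) := by positivity
    nlinarith [sq_nonneg (Real.sinh (κ*t) ^ n), mul_pos hcp hcp]
  have h0 : Real.sinh (κ*0) ^ (n+1) / Real.cosh (κ*0) = 0 := by simp
  have htanh : Real.sinh (κ * r) ^ n * Real.tanh (κ * r)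
      = Real.sinh (κ*r) ^ (n+1) / Real.cosh (κ*r) := by
    rw [Real.tanh_eq_sinh_div_cosh, pow_succ]
    ring
  rw [htanh, ← intervalIntegral.integral_const_mul]
  calc Real.sinh (κ*r) ^ (n+1) / Real.cosh (κ*r)
      = ∫ t in (0:ℝ)..r, g t := by rw [hint, h0]; ring
    _ ≤ _ := hmono
end

section
/- Let X be a compact metric measure space with measure 𝓗ᵏ, and suppose the Poincaré inequality ∫_X |f − ⨍_X f| ≤ C·∫_X |df| holds for all Lipschitz functions f on X (where ⨍ denotes the average and |df| is the pointwise Lipschitz constant). Suppose X = A ∪ S ∪ B where A, B are open, disjoint, with 𝓗ᵏ(A) > 0 and 𝓗ᵏ(B) > 0. If there exists a family of Lipschitz functions f_t (t → 0) with f_t = c_B < 0 on B, f_t = c_A > 0 on A, |f_t| ≤ M, |df_t| supported on S_t ⊇ S with (1/t)·𝓗ᵏ(S_t) → 0 and |df_t| ≤ M/t, then 𝓗ᵏ(A)·𝓗ᵏ(B) = 0 — a contradiction. Hence no such decomposition with both 𝓗ᵏ(A), 𝓗ᵏ(B) > 0 and 𝓗ᵏ-negligible separating collar growth exists. -/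
open MeasureTheory Filter

/-- Pointwise Lipschitz constant `Lip f(x) = limsup_{y → x, y ≠ x} |f x − f y| / d(x,y)`. -/
noncomputable def lipConst {X : Type*} [MetricSpace X] (f : X → ℝ) (x : X) : ℝ :=
  Filter.limsup (fun y => |f x - f y| / dist x y) (nhdsWithin x {x}ᶜ)

lemma lipConst_nonneg {X : Type*} [MetricSpace X] (f : X → ℝ) (x : X) :
    0 ≤ lipConst f x := by
  rw [lipConst, Filter.limsup_eq]
  rcases eq_or_neBot (nhdsWithin x {x}ᶜ) with h | h
  · rw [h]
    have : {a : ℝ | ∀ᶠ y in (⊥ : Filter X), |f x - f y| / dist x y ≤ a} = Set.univ := by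
      ext a; simp
    rw [this, Real.sInf_of_not_bddBelow]
    intro ⟨b, hb⟩
    exact absurd (hb (Set.mem_univ (b - 1))) (by simp)
  · apply Real.sInf_nonneg
    intro a ha
    by_contra hneg
    push_neg at hneg
    have ha' : ∀ᶠ y in nhdsWithin x {x}ᶜ, |f x - f y| / dist x y ≤ a := ha
    obtain ⟨y, hy⟩ := ha'.exists
    have h1 : 0 ≤ |f x - f y| / dist x y := div_nonneg (abs_nonneg _) dist_nonneg
    linarith

/-- A Poincaré inequality on a compact metric measure space is incompatible with
a sequence of Lipschitz cutoff functions separating two sets of positive measure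
whose gradients concentrate on sets of measure `o(t)` with gradient bound `M/t`. -/
theorem stmt_16 {X : Type*} [MetricSpace X] [CompactSpace X]
    [MeasurableSpace X] [BorelSpace X]
    (μ : Measure X) [IsFiniteMeasure μ] (C : ℝ) (hC : 0 < C)
    (hPoincare : ∀ f : X → ℝ, (∃ K : NNReal, LipschitzWith K f) →
      ∫ x, |f x - ⨍ y, f y ∂μ| ∂μ ≤ C * ∫ x, lipConst f x ∂μ)
    (A B S : Set X) (hA : IsOpen A) (hB : IsOpen B) (hAB : Disjoint A B)
    (hcover : A ∪ S ∪ B = Set.univ) (hμA : 0 < μ A) (hμB : 0 < μ B)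
    (cA cB M : ℝ) (hcA : 0 < cA) (hcB : cB < 0) (hM : 0 < M)
    (t : ℕ → ℝ) (htpos : ∀ i, 0 < t i) (ht0 : Tendsto t atTop (nhds 0))
    (f : ℕ → X → ℝ) (hfLip : ∀ i, ∃ K : NNReal, LipschitzWith K (f i))
    (hfA : ∀ i, ∀ x ∈ A, f i x = cA) (hfB : ∀ i, ∀ x ∈ B, f i x = cB)
    (hfbd : ∀ i x, |f i x| ≤ M)
    (St : ℕ → Set X) (hSsub : ∀ i, S ⊆ St i)
    (hgradsupp : ∀ i, ∀ x ∉ St i, lipConst (f i) x = 0)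
    (hgradbd : ∀ i x, lipConst (f i) x ≤ M / t i)
    (hSt : Tendsto (fun i => (1 / t i) * (μ (St i)).toReal) atTop (nhds 0)) :
    False := by
  have hμAfin : μ A ≠ ⊤ := measure_ne_top μ A
  have hμBfin : μ B ≠ ⊤ := measure_ne_top μ B
  set mA : ℝ := (μ A).toReal with hmA
  set mB : ℝ := (μ B).toReal with hmB
  have hmApos : 0 < mA := ENNReal.toReal_pos hμA.ne' hμAfin
  have hmBpos : 0 < mB := ENNReal.toReal_pos hμB.ne' hμBfin
  set m : ℝ := min mA mB with hm
  have hmpos : 0 < m := lt_min hmApos hmBpos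
  set ε : ℝ := m * (cA - cB) with hε
  have hεpos : 0 < ε := mul_pos hmpos (by linarith)
  -- upper bound on the gradient integral
  have hgrad : ∀ i, ∫ x, lipConst (f i) x ∂μ ≤ (M / t i) * (μ (St i)).toReal := by
    intro i
    have hMt : 0 ≤ M / t i := le_of_lt (div_pos hM (htpos i))
    have hptwise : ∀ x, ENNReal.ofReal ‖lipConst (f i) x‖ ≤
        (St i).indicator (fun _ => ENNReal.ofReal (M / t i)) x := by
      intro x
      by_cases hx : x ∈ St i
      · rw [Set.indicator_of_mem hx]
        apply ENNReal.ofReal_le_ofReal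
        rw [Real.norm_eq_abs, abs_of_nonneg (lipConst_nonneg _ _)]
        exact hgradbd i x
      · rw [Set.indicator_of_notMem hx, hgradsupp i x hx]
        simp
    calc ∫ x, lipConst (f i) x ∂μ ≤ ‖∫ x, lipConst (f i) x ∂μ‖ := le_abs_self _
      _ ≤ (∫⁻ x, ENNReal.ofReal ‖lipConst (f i) x‖ ∂μ).toReal :=
          norm_integral_le_lintegral_norm _
      _ ≤ (ENNReal.ofReal (M / t i) * μ (St i)).toReal := by
          apply ENNReal.toReal_mono
          · exact ENNReal.mul_ne_top ENNReal.ofReal_ne_top (measure_ne_top μ _)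
          · exact le_trans (lintegral_mono hptwise) (lintegral_indicator_const_le _ _)
      _ = (M / t i) * (μ (St i)).toReal := by
          rw [ENNReal.toReal_mul, ENNReal.toReal_ofReal hMt]
  -- lower bound on the Poincaré left-hand side
  have hlower : ∀ i, ε ≤ ∫ x, |f i x - ⨍ y, f i y ∂μ| ∂μ := by
    intro i
    set a : ℝ := ⨍ y, f i y ∂μ with ha
    obtain ⟨K, hK⟩ := hfLip i
    have hcont : Continuous fun x => |f i x - a| := (hK.continuous.sub continuous_const).abs
    have hgint : Integrable (fun x => |f i x - a|) μ :=
      hcont.integrable_of_hasCompactSupport (HasCompactSupport.of_compactSpace _)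
    have hnn : 0 ≤ᶠ[ae μ] fun x => |f i x - a| :=
      Filter.Eventually.of_forall fun x => abs_nonneg _
    have hIA : ∫ x in A, |f i x - a| ∂μ = mA * |cA - a| := by
      rw [setIntegral_congr_fun hA.measurableSet
        (fun x hx => by rw [hfA i x hx]), setIntegral_const, smul_eq_mul]
      rfl
    have hIB : ∫ x in B, |f i x - a| ∂μ = mB * |cB - a| := by
      rw [setIntegral_congr_fun hB.measurableSet
        (fun x hx => by rw [hfB i x hx]), setIntegral_const, smul_eq_mul]
      rfl
    have hAB' : ∫ x in A ∪ B, |f i x - a| ∂μ =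
        ∫ x in A, |f i x - a| ∂μ + ∫ x in B, |f i x - a| ∂μ :=
      setIntegral_union hAB hB.measurableSet hgint.integrableOn hgint.integrableOn
    have hle : ∫ x in A ∪ B, |f i x - a| ∂μ ≤ ∫ x, |f i x - a| ∂μ :=
      setIntegral_le_integral hgint hnn
    have h1 : cA - a ≤ |cA - a| := le_abs_self _
    have h2 : a - cB ≤ |cB - a| := by
      rw [abs_sub_comm]; exact le_abs_self _
    have h3 : m ≤ mA := min_le_left _ _
    have h4 : m ≤ mB := min_le_right _ _
    have h5 : 0 ≤ |cA - a| := abs_nonneg _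
    have h6 : 0 ≤ |cB - a| := abs_nonneg _
    have : ε ≤ mA * |cA - a| + mB * |cB - a| := by
      rw [hε]
      nlinarith
    rw [hIA, hIB] at hAB'
    linarith [hAB' ▸ hle]
  -- combine
  have hkey : ∀ i, ε ≤ C * M * ((1 / t i) * (μ (St i)).toReal) := by
    intro i
    have h1 := hPoincare (f i) (hfLip i)
    have h2 := hgrad i
    have h3 : C * ∫ x, lipConst (f i) x ∂μ ≤ C * ((M / t i) * (μ (St i)).toReal) :=
      mul_le_mul_of_nonneg_left h2 hC.le
    have heq : C * ((M / t i) * (μ (St i)).toReal) =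
        C * M * ((1 / t i) * (μ (St i)).toReal) := by
      field_simp
    linarith [hlower i, h1, heq ▸ h3]
  have hlim : Tendsto (fun i => C * M * ((1 / t i) * (μ (St i)).toReal)) atTop
      (nhds (C * M * 0)) := hSt.const_mul (C * M)
  rw [mul_zero] at hlim
  have := ge_of_tendsto' hlim hkey
  linarith
end
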